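/- Let N ≥ 1, let z : Fin N → ℂ be injective, let w : Fin N → ℂ satisfy w_j ≠ 0 for all j, let f : Fin N → ℂ, and let R be the extended barycentric function (R = n/d off the support points, R(z_j) = f_j). Let g : Fin N → ℂ be prescribed derivative values and let B be the N×N complex matrix with B_{ii} = g_i and B_{ij} = (f_i − f_j)/(z_i − z_j) for i ≠ j. Then B · w = 0 (the weight vector lies in the kernel of B) if and only if for every i, R has a complex derivative at z_i equal to g_i. -/

import Mathlib

open Finset

/-- AAAbudget Hermite condition: with all weights nonzero, the weight vector lies
in the kernel of the Hermite matrix `B` iff the extended barycentric function has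
derivative `g i` at each support point `z i`. -/
theorem barycentric_hermite_kernel_iff_derivatives
    (N : ℕ) (hN : 1 ≤ N) (z : Fin N → ℂ) (hz : Function.Injective z)
    (w f : Fin N → ℂ) (hw : ∀ j, w j ≠ 0)
    (R : ℂ → ℂ)
    (hRnode : ∀ j, R (z j) = f j)
    (hRoff : ∀ ζ : ℂ, (∀ j, ζ ≠ z j) →
      R ζ = (∑ j, w j * f j / (ζ - z j)) / (∑ j, w j / (ζ - z j)))
    (g : Fin N → ℂ)
    (B : Matrix (Fin N) (Fin N) ℂ)
    (hB : ∀ i j, B i j = if i = j then g i else (f i - f j) / (z i - z j)) :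
    B.mulVec w = 0 ↔ ∀ i, HasDerivAt R (g i) (z i) := by
  classical
  set T : Fin N → ℂ := fun i => ∑ j, if j = i then 0 else w j * (f j - f i) / (z i - z j)
    with hT
  -- Key: R always has derivative T i / w i at z i.
  have key : ∀ i, HasDerivAt R (T i / w i) (z i) := by
    intro i
    have hzsub : ∀ j : Fin N, j ≠ i → z i - z j ≠ 0 := by
      intro j hj
      exact sub_ne_zero.mpr (fun he => hj (hz he).symm)
    set q : Fin N → ℂ → ℂ := fun j ζ => if j = i then 1 else (ζ - z i) / (ζ - z j) with hq
    set Num : ℂ → ℂ := fun ζ => ∑ j, w j * f j * q j ζ with hNum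
    set Den : ℂ → ℂ := fun ζ => ∑ j, w j * q j ζ with hDen
    have hqval : ∀ j, q j (z i) = if j = i then 1 else 0 := by
      intro j
      by_cases h : j = i <;> simp [hq, h]
    have hqderiv : ∀ j, HasDerivAt (q j) (if j = i then 0 else (z i - z j)⁻¹) (z i) := by
      intro j
      by_cases h : j = i
      · simp only [hq, h, if_pos rfl]
        exact hasDerivAt_const (z i) (1 : ℂ)
      · have hne : z i - z j ≠ 0 := hzsub j h
        have hu : HasDerivAt (fun ζ : ℂ => ζ - z i) 1 (z i) := by
          simpa using (hasDerivAt_id (z i)).sub_const (z i)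
        have hv : HasDerivAt (fun ζ : ℂ => ζ - z j) 1 (z i) := by
          simpa using (hasDerivAt_id (z i)).sub_const (z j)
        have hdiv := hu.div hv hne
        simp only [hq, if_neg h]
        refine hdiv.congr_deriv ?_
        rw [div_eq_iff (pow_ne_zero 2 hne), sq, ← mul_assoc, inv_mul_cancel₀ hne]
        ring
    have hNumDeriv : HasDerivAt Num
        (∑ j, w j * f j * (if j = i then 0 else (z i - z j)⁻¹)) (z i) :=
      HasDerivAt.fun_sum fun j _ => (hqderiv j).const_mul (w j * f j)
    have hDenDeriv : HasDerivAt Den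
        (∑ j, w j * (if j = i then 0 else (z i - z j)⁻¹)) (z i) :=
      HasDerivAt.fun_sum fun j _ => (hqderiv j).const_mul (w j)
    have hNumval : Num (z i) = w i * f i := by
      simp [hNum, hqval, mul_ite, mul_one, mul_zero, Finset.sum_ite_eq']
    have hDenval : Den (z i) = w i := by
      simp [hDen, hqval, mul_ite, mul_one, mul_zero, Finset.sum_ite_eq']
    have hDne : Den (z i) ≠ 0 := by rw [hDenval]; exact hw i
    have hFderiv := hNumDeriv.div hDenDeriv hDne
    have hval : ((∑ j, w j * f j * (if j = i then 0 else (z i - z j)⁻¹)) * Den (z i)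
        - Num (z i) * (∑ j, w j * (if j = i then 0 else (z i - z j)⁻¹))) / Den (z i) ^ 2
        = T i / w i := by
      have hTi : T i = ∑ j, if j = i then 0 else w j * (f j - f i) / (z i - z j) := rfl
      rw [hNumval, hDenval, hTi]
      have hsum : (∑ j, w j * f j * (if j = i then 0 else (z i - z j)⁻¹))
          - f i * (∑ j, w j * (if j = i then 0 else (z i - z j)⁻¹))
          = ∑ j, if j = i then 0 else w j * (f j - f i) / (z i - z j) := by
        rw [Finset.mul_sum, ← Finset.sum_sub_distrib]
        refine Finset.sum_congr rfl fun j _ => ?_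
        by_cases h : j = i
        · simp [h]
        · simp only [if_neg h]
          ring
      rw [← hsum, div_eq_div_iff (pow_ne_zero 2 (hw i)) (hw i)]
      ring
    rw [hval] at hFderiv
    have hev : (fun ζ => Num ζ / Den ζ) =ᶠ[nhds (z i)] R := by
      have h1 : ∀ᶠ ζ in nhds (z i), ∀ j, j ≠ i → ζ ≠ z j := by
        rw [Filter.eventually_all]
        intro j
        by_cases h : j = i
        · filter_upwards with ζ hj; exact absurd h hj
        · filter_upwards [eventually_ne_nhds (sub_ne_zero.mp (hzsub j h))] with ζ hζ _
          exact hζ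
      filter_upwards [h1] with ζ hζ
      by_cases hζi : ζ = z i
      · subst hζi
        rw [hRnode i, hNumval, hDenval]
        exact mul_div_cancel_left₀ (f i) (hw i)
      · have hall : ∀ j, ζ ≠ z j := by
          intro j
          by_cases hj : j = i
          · subst hj; exact hζi
          · exact hζ j hj
        rw [hRoff ζ hall]
        have hsub : ζ - z i ≠ 0 := sub_ne_zero.mpr hζi
        have hNumEq : Num ζ = (ζ - z i) * ∑ j, w j * f j / (ζ - z j) := by
          rw [hNum, Finset.mul_sum]
          refine Finset.sum_congr rfl fun j _ => ?_
          by_cases hj : j = i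
          · subst hj
            simp only [hq, if_pos rfl, mul_one]
            rw [eq_comm, mul_comm, div_mul_cancel₀ _ hsub]
          · simp only [hq, if_neg hj]
            ring
        have hDenEq : Den ζ = (ζ - z i) * ∑ j, w j / (ζ - z j) := by
          rw [hDen, Finset.mul_sum]
          refine Finset.sum_congr rfl fun j _ => ?_
          by_cases hj : j = i
          · subst hj
            simp only [hq, if_pos rfl, mul_one]
            rw [eq_comm, mul_comm, div_mul_cancel₀ _ hsub]
          · simp only [hq, if_neg hj]
            ring
        rw [hNumEq, hDenEq, mul_div_mul_left _ _ hsub]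
    exact hFderiv.congr_of_eventuallyEq hev.symm
  -- Compute the i-th entry of B.mulVec w.
  have hBw : ∀ i, B.mulVec w i = (g i - T i / w i) * w i := by
    intro i
    have hterm : ∀ j, B i j * w j
        = (if j = i then g i * w i else 0)
          - (if j = i then 0 else w j * (f j - f i) / (z i - z j)) := by
      intro j
      by_cases h : j = i
      · subst h; simp [hB]
      · have h' : i ≠ j := fun e => h e.symm
        rw [hB i j, if_neg h', if_neg h, if_neg h]
        ring
    have : B.mulVec w i = ∑ j, B i j * w j := rfl
    rw [this]
    rw [Finset.sum_congr rfl fun j _ => hterm j, Finset.sum_sub_distrib,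
      Finset.sum_ite_eq' univ i (fun _ => g i * w i)]
    simp only [Finset.mem_univ, if_pos]
    have hTi : (∑ x : Fin N, if x = i then 0 else w x * (f x - f i) / (z i - z x)) = T i := rfl
    rw [hTi, sub_mul, div_mul_cancel₀ _ (hw i)]
  constructor
  · intro h i
    have h0 : B.mulVec w i = 0 := by rw [h]; rfl
    rw [hBw i] at h0
    rcases mul_eq_zero.mp h0 with h1 | h1
    · have hg : g i = T i / w i := sub_eq_zero.mp h1
      rw [hg]
      exact key i
    · exact absurd h1 (hw i)
  · intro h
    funext i
    have hgi : g i = T i / w i := (h i).unique (key i)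
    show B.mulVec w i = 0
    rw [hBw i, hgi, sub_self, zero_mul]
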